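/- The ℚ-algebra homomorphism φ : ℚ[c₁,c₂,ξ,η] → ℚ[A,B,C] determined by c₁ ↦ A+B, c₂ ↦ AB, ξ ↦ C+B−A, η ↦ C is surjective, and its kernel is the principal ideal generated by c₁² − 4c₂ − (ξ−η)²; hence φ induces a ℚ-algebra isomorphism ℚ[c₁,c₂,ξ,η]/(c₁² − 4c₂ − (ξ−η)²) ≅ ℚ[A,B,C]. -/

import Mathlib

open MvPolynomial

namespace Stmt6

/-- The `ℚ`-algebra homomorphism `φ : ℚ[c₁,c₂,ξ,η] → ℚ[A,B,C]` with
`c₁ ↦ A+B`, `c₂ ↦ AB`, `ξ ↦ C+B−A`, `η ↦ C`, where `c₁,c₂,ξ,η` are `X 0, X 1, X 2, X 3`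
and `A,B,C` are `X 0, X 1, X 2`. -/
noncomputable abbrev φ : MvPolynomial (Fin 4) ℚ →ₐ[ℚ] MvPolynomial (Fin 3) ℚ :=
  aeval ![X 0 + X 1, X 0 * X 1, X 2 + X 1 - X 0, X 2]

noncomputable abbrev Iker : Ideal (MvPolynomial (Fin 4) ℚ) :=
  Ideal.span {(X 0 ^ 2 - 4 * X 1 - (X 2 - X 3) ^ 2 : MvPolynomial (Fin 4) ℚ)}

noncomputable abbrev s : Fin 3 → MvPolynomial (Fin 4) ℚ :=
  ![(1/2 : ℚ) • (X 0 - X 2 + X 3),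
    (1/2 : ℚ) • (X 0 + X 2 - X 3), X 3]

lemma phi_gen_zero : φ (X 0 ^ 2 - 4 * X 1 - (X 2 - X 3) ^ 2) = 0 := by
  apply MvPolynomial.funext
  intro x
  simp [map_ofNat]
  try ring

lemma Iker_le_ker : Iker ≤ RingHom.ker (φ : MvPolynomial (Fin 4) ℚ →+* MvPolynomial (Fin 3) ℚ) := by
  rw [Ideal.span_le, Set.singleton_subset_iff]
  exact phi_gen_zero

noncomputable def Φbar : (MvPolynomial (Fin 4) ℚ ⧸ Iker) →ₐ[ℚ] MvPolynomial (Fin 3) ℚ :=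
  Ideal.Quotient.liftₐ Iker φ (fun a ha => by
    rw [← RingHom.mem_ker]; exact Iker_le_ker ha)

noncomputable def Ψ : MvPolynomial (Fin 3) ℚ →ₐ[ℚ] (MvPolynomial (Fin 4) ℚ ⧸ Iker) :=
  (Ideal.Quotient.mkₐ ℚ Iker).comp (aeval s)

lemma Φbar_mk (p : MvPolynomial (Fin 4) ℚ) :
    Φbar (Ideal.Quotient.mk Iker p) = φ p := rfl

lemma comp1 : Φbar.comp Ψ = AlgHom.id ℚ (MvPolynomial (Fin 3) ℚ) := by
  apply MvPolynomial.algHom_ext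
  intro i
  fin_cases i <;>
  · apply MvPolynomial.funext
    intro x
    simp [Φbar_mk, Ψ, s, map_ofNat]
    try ring

lemma comp2 : Ψ.comp Φbar = AlgHom.id ℚ (MvPolynomial (Fin 4) ℚ ⧸ Iker) := by
  have step : ∀ (i : Fin 4) (c : MvPolynomial (Fin 4) ℚ),
      (aeval s (φ (X i)) - X i = (X 0 ^ 2 - 4 * X 1 - (X 2 - X 3) ^ 2) * c) →
      (Ψ.comp Φbar) (Ideal.Quotient.mk Iker (X i))
        = (AlgHom.id ℚ _) (Ideal.Quotient.mk Iker (X i)) := by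
    intro i c hc
    simp only [AlgHom.comp_apply, Ideal.Quotient.mkₐ_eq_mk, Φbar, Ψ,
      Ideal.Quotient.liftₐ_apply, Ideal.Quotient.lift_mk, AlgHom.coe_comp,
      Function.comp_apply, AlgHom.id_apply, aeval_X]
    show (Ideal.Quotient.mk Iker) _ = (Ideal.Quotient.mk Iker) _
    rw [Ideal.Quotient.eq, Ideal.mem_span_singleton]
    exact ⟨c, by rw [← hc]; simp⟩
  apply Ideal.Quotient.algHom_ext
  apply MvPolynomial.algHom_ext
  intro i
  fin_cases i
  · exact step 0 0 (by apply MvPolynomial.funext; intro x; simp [map_ofNat]; ring)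
  · exact step 1 ((1/4 : ℚ) • 1)
      (by apply MvPolynomial.funext; intro x; simp [map_ofNat]; ring)
  · exact step 2 0 (by apply MvPolynomial.funext; intro x; simp [map_ofNat]; ring)
  · exact step 3 0 (by apply MvPolynomial.funext; intro x; simp [map_ofNat])

noncomputable def eIso : (MvPolynomial (Fin 4) ℚ ⧸ Iker) ≃ₐ[ℚ] MvPolynomial (Fin 3) ℚ :=
  AlgEquiv.ofAlgHom Φbar Ψ comp1 comp2

/-- The homomorphism `φ` is surjective, its kernel is the principal ideal generated by
`c₁² − 4c₂ − (ξ−η)²`, and hence `φ` induces a `ℚ`-algebra isomorphism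
`ℚ[c₁,c₂,ξ,η]/(c₁² − 4c₂ − (ξ−η)²) ≅ ℚ[A,B,C]`. -/
theorem surjective_ker_and_iso :
    Function.Surjective φ ∧
    RingHom.ker φ = Ideal.span {(X 0 ^ 2 - 4 * X 1 - (X 2 - X 3) ^ 2 : MvPolynomial (Fin 4) ℚ)} ∧
    ∃ e : (MvPolynomial (Fin 4) ℚ ⧸
        Ideal.span {(X 0 ^ 2 - 4 * X 1 - (X 2 - X 3) ^ 2 : MvPolynomial (Fin 4) ℚ)})
        ≃ₐ[ℚ] MvPolynomial (Fin 3) ℚ,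
      ∀ p : MvPolynomial (Fin 4) ℚ,
        e (Ideal.Quotient.mk
          (Ideal.span {(X 0 ^ 2 - 4 * X 1 - (X 2 - X 3) ^ 2 : MvPolynomial (Fin 4) ℚ)}) p)
          = φ p := by
  have hΦmk : ∀ p : MvPolynomial (Fin 4) ℚ, Φbar (Ideal.Quotient.mk Iker p) = φ p := fun p => rfl
  refine ⟨?_, ?_, ⟨eIso, fun p => rfl⟩⟩
  · intro q
    refine ⟨aeval s q, ?_⟩
    have := congrArg (fun f => f q) (congrArg (fun f => f.toFun) comp1)
    simpa [Φbar_mk, Ψ] using this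
  · ext p
    constructor
    · intro hp
      have h0 : Φbar (Ideal.Quotient.mk Iker p) = 0 := hp
      have hinj : Function.Injective Φbar := eIso.injective
      have : Ideal.Quotient.mk Iker p = 0 := by
        apply hinj; rw [h0]; simp
      exact (Ideal.Quotient.eq_zero_iff_mem).mp this
    · intro hp
      exact Iker_le_ker hp

end Stmt6
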